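/- Let X be a type, p ∈ X, k a natural number, and let x and y be finite multisets over X with card y = card x. If y ≤ x + (replicate k p) (multiset containment, where replicate k p is the multiset consisting of k copies of p), then either y = x, or there exists a multiset s over X with s ≤ x, card s < card y, and y = s + replicate (card y − card s) p. -/

import Mathlib

theorem stmt_9 {X : Type*} (p : X) (k : ℕ) (x y : Multiset X)
    (hcard : Multiset.card y = Multiset.card x)
    (hle : y ≤ x + Multiset.replicate k p) :
    y = x ∨ ∃ s : Multiset X, s ≤ x ∧ Multiset.card s < Multiset.card y ∧
      y = s + Multiset.replicate (Multiset.card y - Multiset.card s) p := by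
  classical
  set s := y ∩ x with hs
  have hsx : s ≤ x := Multiset.inter_le_right
  have hsy : s ≤ y := Multiset.inter_le_left
  have hsub : y - x ≤ Multiset.replicate k p := by
    rw [Multiset.sub_le_iff_le_add]
    rwa [add_comm] at hle
  have hrep : y - x = Multiset.replicate (Multiset.card (y - x)) p := by
    apply Multiset.eq_replicate_card.mpr
    intro b hb
    exact Multiset.eq_of_mem_replicate (Multiset.mem_of_le hsub hb)
  have hdecomp : y = s + (y - x) := by
    ext a
    simp only [hs, Multiset.count_add, Multiset.count_inter, Multiset.count_sub]
    omega
  by_cases hc : Multiset.card s = Multiset.card y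
  · left
    have : s = y := Multiset.eq_of_le_of_card_le hsy (le_of_eq hc.symm)
    have hyx : y ≤ x := this ▸ hsx
    exact Multiset.eq_of_le_of_card_le hyx (le_of_eq hcard.symm)
  · right
    refine ⟨s, hsx, ?_, ?_⟩
    · exact lt_of_le_of_ne (Multiset.card_le_card hsy) hc
    · have hcards : Multiset.card (y - x) = Multiset.card y - Multiset.card s := by
        have := congrArg Multiset.card hdecomp
        simp only [Multiset.card_add] at this
        omega
      rw [hcards] at hrep
      conv_lhs => rw [hdecomp, hrep]
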